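/- Every solution of the ODE y'' − (τ'/τ) y' + τ² y = 0, where τ is a nonvanishing differentiable function, is of the form y(s) = b₁ cos(w(s)) + b₂ sin(w(s)) with w an antiderivative of τ and b₁, b₂ real constants. -/

import Mathlib

/-- On a convex set, a function with zero derivative is constant. -/
lemma const_of_hasDerivAt_zero {I : Set ℝ} (hconv : Convex ℝ I) {f : ℝ → ℝ}
    (hf : ∀ s ∈ I, HasDerivAt f 0 s) {a b : ℝ} (ha : a ∈ I) (hb : b ∈ I) :
    f a = f b := by
  have h := hconv.norm_image_sub_le_of_norm_hasDerivWithin_le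
    (f' := fun _ => (0 : ℝ)) (C := 0)
    (fun x hx => (hf x hx).hasDerivWithinAt) (fun x _ => by simp) ha hb
  rw [zero_mul] at h
  have := norm_le_zero_iff.mp h
  linarith [sub_eq_zero.mp this]

/-- Every solution of y'' − (τ'/τ)y' + τ²y = 0 with τ nonvanishing C¹ is of the
form y = b₁ cos∘w + b₂ sin∘w, where w is an antiderivative of τ. -/
theorem ode_solution_trig (I : Set ℝ) (hI : IsOpen I) (hconv : Convex ℝ I)
    (τ w y y' y'' : ℝ → ℝ)
    (hτ : ContDiff ℝ 1 τ) (hτ0 : ∀ s ∈ I, τ s ≠ 0)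
    (hw : ∀ s ∈ I, HasDerivAt w (τ s) s)
    (hy : ∀ s ∈ I, HasDerivAt y (y' s) s)
    (hy' : ∀ s ∈ I, HasDerivAt y' (y'' s) s)
    (hode : ∀ s ∈ I, y'' s - (deriv τ s / τ s) * y' s + (τ s) ^ 2 * y s = 0) :
    ∃ b₁ b₂ : ℝ, ∀ s ∈ I, y s = b₁ * Real.cos (w s) + b₂ * Real.sin (w s) := by
  rcases I.eq_empty_or_nonempty with hIe | ⟨s₀, hs₀⟩
  · exact ⟨0, 0, by simp [hIe]⟩
  set f : ℝ → ℝ := fun s => y s * Real.cos (w s) - (y' s / τ s) * Real.sin (w s) with hf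
  set g : ℝ → ℝ := fun s => y s * Real.sin (w s) + (y' s / τ s) * Real.cos (w s) with hg
  have hτd : ∀ s : ℝ, HasDerivAt τ (deriv τ s) s := fun s =>
    ((hτ.differentiable one_ne_zero) s).hasDerivAt
  have hcos : ∀ s ∈ I, HasDerivAt (fun t => Real.cos (w t)) (-Real.sin (w s) * τ s) s :=
    fun s hs => (Real.hasDerivAt_cos (w s)).comp s (hw s hs)
  have hsin : ∀ s ∈ I, HasDerivAt (fun t => Real.sin (w t)) (Real.cos (w s) * τ s) s :=
    fun s hs => (Real.hasDerivAt_sin (w s)).comp s (hw s hs)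
  have hq : ∀ s ∈ I, HasDerivAt (fun t => y' t / τ t)
      ((y'' s * τ s - y' s * deriv τ s) / τ s ^ 2) s :=
    fun s hs => (hy' s hs).div (hτd s) (hτ0 s hs)
  have key : ∀ s ∈ I, y'' s = (deriv τ s / τ s) * y' s - τ s ^ 2 * y s := by
    intro s hs; have := hode s hs; linarith
  have hf' : ∀ s ∈ I, HasDerivAt f 0 s := by
    intro s hs
    have h := ((hy s hs).mul (hcos s hs)).sub ((hq s hs).mul (hsin s hs))
    refine h.congr_deriv ?_
    have hτs := hτ0 s hs
    rw [key s hs]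
    field_simp
    ring
  have hg' : ∀ s ∈ I, HasDerivAt g 0 s := by
    intro s hs
    have h := ((hy s hs).mul (hsin s hs)).add ((hq s hs).mul (hcos s hs))
    refine h.congr_deriv ?_
    have hτs := hτ0 s hs
    rw [key s hs]
    field_simp
    ring
  refine ⟨f s₀, g s₀, fun s hs => ?_⟩
  have hfc : f s₀ = f s := const_of_hasDerivAt_zero hconv hf' hs₀ hs
  have hgc : g s₀ = g s := const_of_hasDerivAt_zero hconv hg' hs₀ hs
  rw [hfc, hgc]
  have := Real.sin_sq_add_cos_sq (w s)
  simp only [hf, hg]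
  linear_combination (-(y s)) * this
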